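/- For fixed a, Q, Γ, V, w, τ, N₀, W > 0, the function h(p) = -Q·a·W·τ·log₂(1 + Γ·p/(a·N₀·W)) + V·w·p is convex on [0, ∞), its unique stationary point is p* = a·W·(Qτ/(Vw·ln2) - N₀/Γ), and the minimizer over [0, p_max] equals min{max{a·W·(Qτ/(Vw·ln2) - N₀/Γ), 0}, p_max}. -/

import Mathlib

theorem power_subproblem_optimal (Q a Γ V w τ N₀ W pmax : ℝ)
    (hQ : 0 < Q) (ha : 0 < a) (ha1 : a ≤ 1) (hΓ : 0 < Γ) (hV : 0 < V) (hw : 0 < w)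
    (hτ : 0 < τ) (hN : 0 < N₀) (hW : 0 < W) (hpmax : 0 < pmax) :
    ConvexOn ℝ (Set.Ici (0 : ℝ))
        (fun p : ℝ => -(Q * a * W * τ * Real.logb 2 (1 + Γ * p / (a * N₀ * W))) + V * w * p) ∧
      (∀ p ∈ Set.Ici (0 : ℝ),
        (deriv (fun p : ℝ =>
            -(Q * a * W * τ * Real.logb 2 (1 + Γ * p / (a * N₀ * W))) + V * w * p) p = 0 ↔
          p = a * W * (Q * τ / (V * w * Real.log 2) - N₀ / Γ))) ∧
      IsMinOn (fun p : ℝ =>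
          -(Q * a * W * τ * Real.logb 2 (1 + Γ * p / (a * N₀ * W))) + V * w * p)
        (Set.Icc 0 pmax)
        (min (max (a * W * (Q * τ / (V * w * Real.log 2) - N₀ / Γ)) 0) pmax) := by
  set L := Real.log 2 with hLdef
  have hL : 0 < L := Real.log_pos one_lt_two
  set D := a * N₀ * W with hDdef
  have hD : 0 < D := by rw [hDdef]; positivity
  set pstar := a * W * (Q * τ / (V * w * L) - N₀ / Γ) with hps
  set f : ℝ → ℝ := fun p : ℝ => -(Q * a * W * τ * Real.logb 2 (1 + Γ * p / D)) + V * w * p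
    with hfdef
  have hu : ∀ p : ℝ, 0 ≤ p → 0 < 1 + Γ * p / D := by
    intro p hp
    have : 0 ≤ Γ * p / D := by positivity
    linarith
  have hC : (0 : ℝ) < V * w * Γ / D := by positivity
  have hkey : 1 + Γ * pstar / D = Γ * Q * τ / (V * w * L * N₀) := by
    rw [hps, hDdef]
    field_simp
    ring
  have hkey' : (0 : ℝ) < 1 + Γ * pstar / D := by
    rw [hkey]; positivity
  have hderiv : ∀ p : ℝ, 0 ≤ p →
      HasDerivAt f (V * w * Γ / D * (p - pstar) / (1 + Γ * p / D)) p := by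
    intro p hp
    have hup := hu p hp
    have h1 : HasDerivAt (fun q : ℝ => 1 + Γ * q / D) (Γ / D) p := by
      have he : (fun q : ℝ => 1 + Γ * q / D) = fun q : ℝ => (Γ / D) * q + 1 := by
        ext q; ring
      rw [he]
      simpa using ((hasDerivAt_id p).const_mul (Γ / D)).add_const 1
    have h2 : HasDerivAt (fun q : ℝ => Real.log (1 + Γ * q / D))
        ((1 + Γ * p / D)⁻¹ * (Γ / D)) p :=
      by have := (Real.hasDerivAt_log hup.ne').comp p h1; exact this
    have h3 : HasDerivAt f
        (-(Q * a * W * τ * ((1 + Γ * p / D)⁻¹ * (Γ / D) / L)) + V * w) p := by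
      have he : f = fun q : ℝ =>
          -(Q * a * W * τ * (Real.log (1 + Γ * q / D) / L)) + V * w * q := by
        ext q; rw [hfdef]; simp [Real.logb, hLdef]
      rw [he]
      have h4 := (((h2.div_const L).const_mul (Q * a * W * τ)).neg).add
        ((hasDerivAt_id p).const_mul (V * w))
      simp only [mul_one] at h4
      exact h4
    convert h3 using 1
    rw [hps]
    field_simp
    ring
  have hderiv' : ∀ p : ℝ, 0 ≤ p →
      deriv f p = V * w * Γ / D * (p - pstar) / (1 + Γ * p / D) :=
    fun p hp => (hderiv p hp).deriv
  have hcont : ContinuousOn f (Set.Ici (0 : ℝ)) :=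
    fun p hp => ((hderiv p hp).continuousAt).continuousWithinAt
  refine ⟨?_, ?_, ?_⟩
  · refine MonotoneOn.convexOn_of_deriv (convex_Ici 0) hcont ?_ ?_
    · rw [interior_Ici]
      exact fun p hp => ((hderiv p (le_of_lt hp)).differentiableAt).differentiableWithinAt
    · rw [interior_Ici]
      intro x hx y hy hxy
      rw [hderiv' x (le_of_lt hx), hderiv' y (le_of_lt hy)]
      rw [div_le_div_iff₀ (hu x (le_of_lt hx)) (hu y (le_of_lt hy))]
      have h5 : 0 ≤ V * w * Γ / D * (y - x) * (1 + Γ * pstar / D) :=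
        mul_nonneg (mul_nonneg hC.le (sub_nonneg.2 hxy)) hkey'.le
      have hident : V * w * Γ / D * (y - pstar) * (1 + Γ * x / D)
          - V * w * Γ / D * (x - pstar) * (1 + Γ * y / D)
          = V * w * Γ / D * (y - x) * (1 + Γ * pstar / D) := by ring
      linarith [h5, hident]
  · intro p hp
    have hp' : (0 : ℝ) ≤ p := hp
    rw [hderiv' p hp', div_eq_zero_iff]
    constructor
    · rintro (h | h)
      · rcases mul_eq_zero.mp h with h' | h'
        · exact absurd h' hC.ne'
        · exact sub_eq_zero.mp h'
      · exact absurd h (hu p hp').ne'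
    · intro h
      left
      rw [h, sub_self, mul_zero]
  · set q := min (max pstar 0) pmax with hq
    have hq0 : 0 ≤ q := le_min (le_max_right _ _) hpmax.le
    have hqp : q ≤ pmax := min_le_right _ _
    have hanti : AntitoneOn f (Set.Icc 0 q) := by
      refine antitoneOn_of_deriv_nonpos (convex_Icc 0 q)
        (hcont.mono (Set.Icc_subset_Ici_self)) ?_ ?_
      · rw [interior_Icc]
        exact fun x hx => ((hderiv x hx.1.le).differentiableAt).differentiableWithinAt
      · rw [interior_Icc]
        intro x hx
        rw [hderiv' x hx.1.le]
        have hxps : x < pstar := by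
          have h1 : x < max pstar 0 := lt_of_lt_of_le hx.2 (min_le_left _ _)
          rcases lt_max_iff.mp h1 with h | h
          · exact h
          · exact absurd hx.1 (not_lt.mpr h.le)
        apply div_nonpos_of_nonpos_of_nonneg
        · exact mul_nonpos_of_nonneg_of_nonpos hC.le (by linarith)
        · exact (hu x hx.1.le).le
    have hmono : MonotoneOn f (Set.Icc q pmax) := by
      refine monotoneOn_of_deriv_nonneg (convex_Icc q pmax)
        (hcont.mono (fun x hx => le_trans hq0 hx.1)) ?_ ?_
      · rw [interior_Icc]
        exact fun x hx =>
          ((hderiv x (le_trans hq0 hx.1.le)).differentiableAt).differentiableWithinAt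
      · rw [interior_Icc]
        intro x hx
        rw [hderiv' x (le_trans hq0 hx.1.le)]
        have hxps : pstar ≤ x := by
          rcases min_choice (max pstar 0) pmax with h | h
          · calc pstar ≤ max pstar 0 := le_max_left _ _
              _ = q := h.symm
              _ ≤ x := hx.1.le
          · exact absurd (lt_of_lt_of_le hx.2 (le_of_eq h.symm)) (not_lt.mpr hx.1.le)
        apply div_nonneg
        · exact mul_nonneg hC.le (by linarith)
        · exact (hu x (le_trans hq0 hx.1.le)).le
    rw [isMinOn_iff]
    intro x hx
    rcases le_total x q with h | h
    · exact hanti ⟨hx.1, h⟩ ⟨hq0, le_rfl⟩ h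
    · exact hmono ⟨le_rfl, hqp⟩ ⟨h, hx.2⟩ h
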